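/- Let ≿ be a complete transitive continuous betweenness relation on compact convex X with x* ≻ x_*. For each (x,t) ∈ X × (0,1) define ξ_t(x) = x_* if x ≿ m_t and ξ_t(x) = x* otherwise. Then there exists a unique μ(x,t) ∈ (0,1] such that m_t ∼ μ(x,t) x + (1 − μ(x,t)) ξ_t(x). -/

import Mathlib

open Set

lemma calib_key
    {E : Type*} [AddCommGroup E] [Module ℝ E] [TopologicalSpace E]
    [IsTopologicalAddGroup E] [ContinuousSMul ℝ E]
    (X : Set E) (hXconv : Convex ℝ X)
    (r : E → E → Prop)
    (hcomp : ∀ x ∈ X, ∀ y ∈ X, r x y ∨ r y x)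
    (htrans : ∀ x ∈ X, ∀ y ∈ X, ∀ z ∈ X, r x y → r y z → r x z)
    (hclosed : ∀ y ∈ X, IsClosed {x ∈ X | r x y} ∧ IsClosed {x ∈ X | r y x})
    (hbet : ∀ x ∈ X, ∀ y ∈ X, ∀ l ∈ Ioo (0:ℝ) 1,
      (r x y ∧ ¬ r y x) →
        ((r x (l • x + (1 - l) • y) ∧ ¬ r (l • x + (1 - l) • y) x) ∧
         (r (l • x + (1 - l) • y) y ∧ ¬ r y (l • x + (1 - l) • y))))
    (b xx m : E) (hb : b ∈ X) (hxx : xx ∈ X) (hm : m ∈ X)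
    (hside : (¬ r b m ∧ r xx m) ∨ (¬ r m b ∧ r m xx)) :
    ∃! mu : ℝ, mu ∈ Ioc (0:ℝ) 1 ∧
      (r m (mu • xx + (1 - mu) • b) ∧ r (mu • xx + (1 - mu) • b) m) := by
  set γ : ℝ → E := fun μ => μ • xx + (1 - μ) • b with hγ
  have hγcont : Continuous γ := by fun_prop
  have hγX : ∀ μ ∈ Icc (0:ℝ) 1, γ μ ∈ X := fun μ hμ =>
    hXconv hxx hb hμ.1 (by linarith [hμ.2]) (by ring)
  have hγ0 : γ 0 = b := by simp [hγ]
  have hγ1 : γ 1 = xx := by simp [hγ]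
  -- not both relations hold between m and b
  have hnotboth : ¬ (r m b ∧ r b m) := by
    rcases hside with ⟨h1, _⟩ | ⟨h1, _⟩ <;> tauto
  -- existence
  have hex : ∃ μ ∈ Ioc (0:ℝ) 1, r m (γ μ) ∧ r (γ μ) m := by
    set A : Set ℝ := γ ⁻¹' {z | z ∈ X ∧ r m z} with hA
    set B : Set ℝ := γ ⁻¹' {z | z ∈ X ∧ r z m} with hB
    have hAc : IsClosed A := (hclosed m hm).2.preimage hγcont
    have hBc : IsClosed B := (hclosed m hm).1.preimage hγcont
    have hcover : Icc (0:ℝ) 1 ⊆ A ∪ B := by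
      intro μ hμ
      have hX' := hγX μ hμ
      rcases hcomp m hm (γ μ) hX' with h | h
      · exact Or.inl ⟨hX', h⟩
      · exact Or.inr ⟨hX', h⟩
    have hAne : (Icc (0:ℝ) 1 ∩ A).Nonempty := by
      rcases hside with ⟨h1, _⟩ | ⟨_, h2⟩
      · exact ⟨0, ⟨le_refl _, zero_le_one⟩, by
          simp only [hA, mem_preimage, hγ0]
          exact ⟨hb, (hcomp b hb m hm).resolve_left h1⟩⟩
      · exact ⟨1, ⟨zero_le_one, le_refl _⟩, by
          simp only [hA, mem_preimage, hγ1]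
          exact ⟨hxx, h2⟩⟩
    have hBne : (Icc (0:ℝ) 1 ∩ B).Nonempty := by
      rcases hside with ⟨_, h2⟩ | ⟨h1, _⟩
      · exact ⟨1, ⟨zero_le_one, le_refl _⟩, by
          simp only [hB, mem_preimage, hγ1]
          exact ⟨hxx, h2⟩⟩
      · exact ⟨0, ⟨le_refl _, zero_le_one⟩, by
          simp only [hB, mem_preimage, hγ0]
          exact ⟨hb, (hcomp m hm b hb).resolve_left h1⟩⟩
    obtain ⟨μ, hμI, hμA, hμB⟩ :=
      (isPreconnected_closed_iff.mp isPreconnected_Icc) A B hAc hBc hcover hAne hBne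
    have hrel : r m (γ μ) ∧ r (γ μ) m := ⟨hμA.2, hμB.2⟩
    have hμ0 : μ ≠ 0 := by
      intro h0
      rw [h0, hγ0] at hrel
      exact hnotboth hrel
    exact ⟨μ, ⟨lt_of_le_of_ne hμI.1 (Ne.symm hμ0), hμI.2⟩, hrel⟩
  obtain ⟨μ₀, hμ₀I, hμ₀r⟩ := hex
  -- uniqueness helper: no two distinct parameters work
  have huniq : ∀ μ ν : ℝ, μ ∈ Ioc (0:ℝ) 1 → ν ∈ Ioc (0:ℝ) 1 →
      (r m (γ μ) ∧ r (γ μ) m) → (r m (γ ν) ∧ r (γ ν) m) → μ < ν → False := by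
    intro μ ν hμI hνI hμr hνr hlt
    have hν0 : (0:ℝ) < ν := hνI.1
    set l : ℝ := μ / ν with hl
    have hlI : l ∈ Ioo (0:ℝ) 1 :=
      ⟨div_pos hμI.1 hν0, (div_lt_one hν0).mpr hlt⟩
    have hμν : l * ν = μ := div_mul_cancel₀ μ hν0.ne'
    have hγνX : γ ν ∈ X := hγX ν ⟨hν0.le, hνI.2⟩
    have hγμX : γ μ ∈ X := hγX μ ⟨hμI.1.le, hμI.2⟩
    -- γ μ is the l-combination of γ ν and b
    have hveq : l • γ ν + (1 - l) • b = γ μ := by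
      simp only [hγ]
      rw [← hμν]
      module
    have hγμγν : r (γ μ) (γ ν) := htrans (γ μ) hγμX m hm (γ ν) hγνX hμr.2 hνr.1
    have hγνγμ : r (γ ν) (γ μ) := htrans (γ ν) hγνX m hm (γ μ) hγμX hνr.2 hμr.1
    rcases hside with ⟨h1, _⟩ | ⟨h1, _⟩
    · -- m ≻ b, so γ ν ≻ b; betweenness gives γ ν ≻ γ μ
      have h2 : r m b := (hcomp b hb m hm).resolve_left h1
      have hνb : r (γ ν) b := htrans (γ ν) hγνX m hm b hb hνr.2 h2
      have hbν : ¬ r b (γ ν) := fun hc =>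
        h1 (htrans b hb (γ ν) hγνX m hm hc hνr.2)
      have := (hbet (γ ν) hγνX b hb l hlI ⟨hνb, hbν⟩).1.2
      rw [hveq] at this
      exact this hγμγν
    · -- b ≻ m, so b ≻ γ ν; betweenness gives γ μ ≻ γ ν
      have h2 : r b m := (hcomp m hm b hb).resolve_left h1
      have hbν : r b (γ ν) := htrans b hb m hm (γ ν) hγνX h2 hνr.1
      have hνb : ¬ r (γ ν) b := fun hc =>
        h1 (htrans m hm (γ ν) hγνX b hb hνr.1 hc)
      have hl'I : 1 - l ∈ Ioo (0:ℝ) 1 := ⟨by linarith [hlI.2], by linarith [hlI.1]⟩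
      have hveq' : (1 - l) • b + (1 - (1 - l)) • γ ν = γ μ := by
        rw [← hveq]; module
      have := (hbet b hb (γ ν) hγνX (1 - l) hl'I ⟨hbν, hνb⟩).2.2
      rw [hveq'] at this
      exact this hγνγμ
  refine ⟨μ₀, ⟨hμ₀I, hμ₀r⟩, ?_⟩
  intro ν ⟨hνI, hνr⟩
  rcases lt_trichotomy ν μ₀ with h | h | h
  · exact absurd (huniq ν μ₀ hνI hμ₀I hνr hμ₀r h) not_false
  · exact h
  · exact absurd (huniq μ₀ ν hμ₀I hνI hμ₀r hνr h) not_false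

theorem calibration_weight_exists_unique
    {E : Type*} [AddCommGroup E] [Module ℝ E] [TopologicalSpace E]
    [IsTopologicalAddGroup E] [ContinuousSMul ℝ E] [T2Space E]
    (X : Set E) (hXconv : Convex ℝ X) (hXcomp : IsCompact X)
    (r : E → E → Prop)
    (hcomp : ∀ x ∈ X, ∀ y ∈ X, r x y ∨ r y x)
    (htrans : ∀ x ∈ X, ∀ y ∈ X, ∀ z ∈ X, r x y → r y z → r x z)
    (hclosed : ∀ y ∈ X, IsClosed {x ∈ X | r x y} ∧ IsClosed {x ∈ X | r y x})
    (hbet : ∀ x ∈ X, ∀ y ∈ X, ∀ l ∈ Ioo (0:ℝ) 1,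
      (r x y ∧ ¬ r y x) →
        ((r x (l • x + (1 - l) • y) ∧ ¬ r (l • x + (1 - l) • y) x) ∧
         (r (l • x + (1 - l) • y) y ∧ ¬ r y (l • x + (1 - l) • y))))
    (xstar xlow : E) (hxstar : xstar ∈ X) (hxlow : xlow ∈ X)
    (hbest : ∀ x ∈ X, r xstar x) (hworst : ∀ x ∈ X, r x xlow)
    (hstrict : r xstar xlow ∧ ¬ r xlow xstar)
    (t : ℝ) (ht : t ∈ Ioo (0:ℝ) 1) (x : E) (hx : x ∈ X) :
    (r x (t • xstar + (1 - t) • xlow) →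
      ∃! mu : ℝ, mu ∈ Ioc (0:ℝ) 1 ∧
        (r (t • xstar + (1 - t) • xlow) (mu • x + (1 - mu) • xlow) ∧
         r (mu • x + (1 - mu) • xlow) (t • xstar + (1 - t) • xlow))) ∧
    (¬ r x (t • xstar + (1 - t) • xlow) →
      ∃! mu : ℝ, mu ∈ Ioc (0:ℝ) 1 ∧
        (r (t • xstar + (1 - t) • xlow) (mu • x + (1 - mu) • xstar) ∧
         r (mu • x + (1 - mu) • xstar) (t • xstar + (1 - t) • xlow))) := by
  set m : E := t • xstar + (1 - t) • xlow with hmdef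
  have hmX : m ∈ X := hXconv hxstar hxlow ht.1.le (by linarith [ht.2]) (by ring)
  have hbetm := hbet xstar hxstar xlow hxlow t ht hstrict
  -- xstar ≻ m and m ≻ xlow
  have hms : ¬ r m xstar := hbetm.1.2
  have hlm : ¬ r xlow m := hbetm.2.2
  constructor
  · intro hxm
    exact calib_key X hXconv r hcomp htrans hclosed hbet xlow x m
      hxlow hx hmX (Or.inl ⟨hlm, hxm⟩)
  · intro hxm
    have hmx : r m x := (hcomp x hx m hmX).resolve_left hxm
    exact calib_key X hXconv r hcomp htrans hclosed hbet xstar x m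
      hxstar hx hmX (Or.inr ⟨hms, hmx⟩)
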